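/- Let p be a prime and n ≥ 1. Let G = GL_n(F_p) (invertible n × n matrices over F_p = ZMod p) act on the polynomial ring R = F_p[X_1, …, X_n] by linear substitution of the variables (a matrix g sends each variable X_j to the linear form Σ_i g_{ij} X_i, extended to an algebra automorphism). Let E ⊆ R be the image of the expansion map determined by X_i ↦ X_i^p; E is a G-stable subspace. Then for every simple module S over the group algebra F_p[G], S occurs as a composition factor of the G-module R/E: there exist F_p[G]-submodules N ⊆ N′ of R/E with N′/N isomorphic to S. -/

import Mathlib

open MvPolynomial

/-- The linear-substitution representation of `GL_n(F_p)` on the polynomial ring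
`R = F_p[X_1, …, X_n]`: a matrix `g` sends each variable `X_j` to the linear form
`Σ_i g_{ij} X_i`, extended to an algebra (in particular linear) endomorphism. -/
noncomputable def glSubstitution (p n : ℕ) :
    Representation (ZMod p) (GL (Fin n) (ZMod p)) (MvPolynomial (Fin n) (ZMod p)) where
  toFun g := (bind₁ fun j : Fin n =>
      ∑ i : Fin n, (g : Matrix (Fin n) (Fin n) (ZMod p)) i j •
        (X i : MvPolynomial (Fin n) (ZMod p))).toLinearMap
  map_one' := by
    have h : (fun j : Fin n => ∑ i : Fin n,
        ((1 : GL (Fin n) (ZMod p)) : Matrix (Fin n) (Fin n) (ZMod p)) i j •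
          (X i : MvPolynomial (Fin n) (ZMod p))) = X := by
      funext j
      simp [Matrix.one_apply, ite_smul]
    show (bind₁ fun j : Fin n => ∑ i : Fin n,
        ((1 : GL (Fin n) (ZMod p)) : Matrix (Fin n) (Fin n) (ZMod p)) i j •
          (X i : MvPolynomial (Fin n) (ZMod p))).toLinearMap = 1
    rw [h]
    refine LinearMap.ext fun f => ?_
    simp [bind₁_X_left]
  map_mul' g h := by
    refine LinearMap.ext fun f => ?_
    show (bind₁ fun j : Fin n => ∑ i : Fin n,
        ((g * h : GL (Fin n) (ZMod p)) : Matrix (Fin n) (Fin n) (ZMod p)) i j •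
          (X i : MvPolynomial (Fin n) (ZMod p))) f
      = (bind₁ fun j : Fin n => ∑ i : Fin n,
          (g : Matrix (Fin n) (Fin n) (ZMod p)) i j •
            (X i : MvPolynomial (Fin n) (ZMod p)))
        ((bind₁ fun j : Fin n => ∑ i : Fin n,
          (h : Matrix (Fin n) (Fin n) (ZMod p)) i j •
            (X i : MvPolynomial (Fin n) (ZMod p))) f)
    rw [bind₁_bind₁]
    congr 1
    apply algHom_ext
    intro j
    rw [bind₁_X_right, bind₁_X_right, map_sum]
    simp only [map_smul, bind₁_X_right, Units.val_mul, Matrix.mul_apply,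
      Finset.smul_sum, smul_smul, Finset.sum_smul]
    rw [Finset.sum_comm]
    simp [mul_comm]

/-- The subspace `E ⊆ F_p[X_1,…,X_n]` of polynomials in the `p`-th powers of the
variables, i.e. the image of the expansion map determined by `X_i ↦ X_i^p`. -/
noncomputable def expandRange (p n : ℕ) : Submodule (ZMod p) (MvPolynomial (Fin n) (ZMod p)) :=
  LinearMap.range (MvPolynomial.expand p :
    MvPolynomial (Fin n) (ZMod p) →ₐ[ZMod p] MvPolynomial (Fin n) (ZMod p)).toLinearMap

/-- `E` is stable under the substitution action of `GL_n(F_p)` (the entries of `g`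
are fixed by the Frobenius, so expansion commutes with linear substitution). -/
theorem expandRange_stable (p n : ℕ) [Fact p.Prime] (g : GL (Fin n) (ZMod p)) :
    expandRange p n ≤ (expandRange p n).comap (glSubstitution p n g) := by
  rintro - ⟨f, rfl⟩
  haveI : ExpChar (MvPolynomial (Fin n) (ZMod p)) p := ExpChar.prime Fact.out
  have hexp : ∀ φ : MvPolynomial (Fin n) (ZMod p),
      MvPolynomial.expand p φ =
        bind₁ (fun i : Fin n => (X i : MvPolynomial (Fin n) (ZMod p)) ^ p) φ := by
    intro φ
    have h : (MvPolynomial.expand p : MvPolynomial (Fin n) (ZMod p) →ₐ[ZMod p] _)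
        = bind₁ (fun i : Fin n => (X i : MvPolynomial (Fin n) (ZMod p)) ^ p) := by
      apply algHom_ext
      intro i
      simp
    rw [h]
  have hlin : ∀ i : Fin n,
      MvPolynomial.expand p (∑ k : Fin n, (g : Matrix (Fin n) (Fin n) (ZMod p)) k i •
          (X k : MvPolynomial (Fin n) (ZMod p)))
        = (∑ k : Fin n, (g : Matrix (Fin n) (Fin n) (ZMod p)) k i •
          (X k : MvPolynomial (Fin n) (ZMod p))) ^ p := by
    intro i
    rw [map_sum, sum_pow_char]
    refine Finset.sum_congr rfl fun k _ => ?_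
    rw [map_smul, expand_X, smul_pow, ZMod.pow_card]
  refine Submodule.mem_comap.mpr ⟨(bind₁ fun j : Fin n => ∑ i : Fin n,
      (g : Matrix (Fin n) (Fin n) (ZMod p)) i j •
        (X i : MvPolynomial (Fin n) (ZMod p))) f, ?_⟩
  show (MvPolynomial.expand p) ((bind₁ fun j : Fin n => ∑ i : Fin n,
      (g : Matrix (Fin n) (Fin n) (ZMod p)) i j •
        (X i : MvPolynomial (Fin n) (ZMod p))) f)
    = (bind₁ fun j : Fin n => ∑ i : Fin n,
      (g : Matrix (Fin n) (Fin n) (ZMod p)) i j •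
        (X i : MvPolynomial (Fin n) (ZMod p))) ((MvPolynomial.expand p) f)
  rw [expand_bind₁, hexp f, bind₁_bind₁]
  congr 1
  apply algHom_ext
  intro i
  rw [bind₁_X_right, bind₁_X_right, map_pow, bind₁_X_right, hlin i]

/-- The induced representation of `GL_n(F_p)` on the quotient `R/E`. -/
noncomputable def glSubstitutionQuot (p n : ℕ) [Fact p.Prime] :
    Representation (ZMod p) (GL (Fin n) (ZMod p))
      (MvPolynomial (Fin n) (ZMod p) ⧸ expandRange p n) where
  toFun g := Submodule.mapQ _ _ (glSubstitution p n g) (expandRange_stable p n g)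
  map_one' := by
    apply Submodule.linearMap_qext
    ext f
    simp [Submodule.mapQ_apply]
  map_mul' g h := by
    apply Submodule.linearMap_qext
    ext f
    simp [Submodule.mapQ_apply]


lemma sum_pow_inj (p : ℕ) (hp : 2 ≤ p) :
    ∀ N (A B : Finset ℕ), (∑ a ∈ A, p ^ a = N) → (∑ b ∈ B, p ^ b = N) → A = B := by
  intro N
  induction N using Nat.strong_induction_on with
  | _ N ih =>
    intro A B hA hB
    rcases Nat.eq_zero_or_pos N with h0 | hpos
    · subst h0
      have hA' : A = ∅ := by
        by_contra h
        obtain ⟨a, ha⟩ := Finset.nonempty_iff_ne_empty.mpr h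
        have : 0 < ∑ a ∈ A, p ^ a :=
          Finset.sum_pos' (fun i _ => Nat.zero_le _) ⟨a, ha, Nat.pow_pos (by omega)⟩
        omega
      have hB' : B = ∅ := by
        by_contra h
        obtain ⟨b, hb⟩ := Finset.nonempty_iff_ne_empty.mpr h
        have : 0 < ∑ b ∈ B, p ^ b :=
          Finset.sum_pos' (fun i _ => Nat.zero_le _) ⟨b, hb, Nat.pow_pos (by omega)⟩
        omega
      rw [hA', hB']
    · -- split off the 0 term
      have key : ∀ C : Finset ℕ, ∑ a ∈ C, p ^ a
          = (if 0 ∈ C then 1 else 0) + p * ∑ a ∈ (C.erase 0).image (· - 1), p ^ a := by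
        intro C
        have himg : ∑ a ∈ (C.erase 0).image (· - 1), p ^ a = ∑ a ∈ C.erase 0, p ^ (a - 1) := by
          rw [Finset.sum_image]
          intro x hx y hy hxy
          have hx0 : x ≠ 0 := Finset.ne_of_mem_erase hx
          have hy0 : y ≠ 0 := Finset.ne_of_mem_erase hy
          have hxy' : x - 1 = y - 1 := hxy
          omega
        rw [himg, Finset.mul_sum]
        have : ∑ a ∈ C.erase 0, p * p ^ (a - 1) = ∑ a ∈ C.erase 0, p ^ a := by
          apply Finset.sum_congr rfl
          intro a ha
          have ha0 : a ≠ 0 := Finset.ne_of_mem_erase ha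
          rw [← pow_succ']
          congr 1
          omega
        rw [this]
        by_cases h : 0 ∈ C
        · rw [if_pos h, ← Finset.sum_erase_add C _ h, pow_zero]; omega
        · simp [Finset.erase_eq_of_notMem h, h]
      have hA2 := key A
      have hB2 := key B
      rw [hA] at hA2; rw [hB] at hB2
      set A' := (A.erase 0).image (· - 1) with hA'def
      set B' := (B.erase 0).image (· - 1) with hB'def
      -- indicators agree
      have h1 := hA2.symm.trans hB2
      have hmod : ∀ c x : ℕ, c < p → (c + p * x) % p = c := by
        intro c x hc
        rw [Nat.add_mul_mod_self_left, Nat.mod_eq_of_lt hc]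
      have hind : (if 0 ∈ A then 1 else 0) = (if 0 ∈ B then (1:ℕ) else 0) := by
        have h2 := congrArg (· % p) h1
        rwa [hmod _ _ (by split_ifs <;> omega), hmod _ _ (by split_ifs <;> omega)] at h2
      have hsum : ∑ a ∈ A', p ^ a = ∑ b ∈ B', p ^ b := by
        rw [hind] at h1
        have h3 : p * (∑ a ∈ A', p ^ a) = p * (∑ b ∈ B', p ^ b) := by omega
        exact Nat.eq_of_mul_eq_mul_left (by omega) h3
      set N' := ∑ a ∈ A', p ^ a with hN'
      have hlt : N' < N := by
        have h1 : (if 0 ∈ A then 1 else 0) + p * N' = N := hA2.symm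
        have : 2 * N' ≤ p * N' := Nat.mul_le_mul_right _ hp
        rcases Nat.eq_zero_or_pos N' with h | h <;> omega
      have hAB' : A' = B' := ih N' hlt A' B' rfl hsum.symm
      -- reconstruct
      have herase : A.erase 0 = B.erase 0 := by
        have : ∀ C : Finset ℕ, ((C.erase 0).image (· - 1)).image (· + 1) = C.erase 0 := by
          intro C
          ext x
          simp only [Finset.mem_image, Finset.mem_erase]
          constructor
          · rintro ⟨y, ⟨z, ⟨hz0, hzC⟩, rfl⟩, rfl⟩
            constructor
            · omega
            · have : z - 1 + 1 = z := by omega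
              rw [this]; exact hzC
          · rintro ⟨hx0, hxC⟩
            exact ⟨x - 1, ⟨x, ⟨hx0, hxC⟩, rfl⟩, by omega⟩
        rw [← this A, ← this B, ← hA'def, ← hB'def, hAB']
      have h0mem : 0 ∈ A ↔ 0 ∈ B := by
        by_cases hA0 : 0 ∈ A <;> by_cases hB0 : 0 ∈ B <;> simp [hA0, hB0] at hind ⊢
      ext x
      rcases eq_or_ne x 0 with rfl | hx
      · exact h0mem
      · constructor <;> intro h
        · have : x ∈ A.erase 0 := Finset.mem_erase.mpr ⟨hx, h⟩
          rw [herase] at this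
          exact Finset.mem_of_mem_erase this
        · have : x ∈ B.erase 0 := Finset.mem_erase.mpr ⟨hx, h⟩
          rw [← herase] at this
          exact Finset.mem_of_mem_erase this


section SpanPart

variable (p n : ℕ) [Fact p.Prime]

/-- The monomial function `g ↦ ∏_{(i,j) ∈ L} g_{ij}` on `GL_n(F_p)`. -/
def uFun (L : List (Fin n × Fin n)) : GL (Fin n) (ZMod p) → ZMod p :=
  fun g => (L.map fun q => (g : Matrix (Fin n) (Fin n) (ZMod p)) q.1 q.2).prod

lemma uFun_nil : uFun p n [] = 1 := by
  funext g; simp [uFun]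

lemma uFun_append (L L' : List (Fin n × Fin n)) :
    uFun p n (L ++ L') = uFun p n L * uFun p n L' := by
  funext g; simp [uFun]

lemma uFun_replicate (m : ℕ) (q : Fin n × Fin n) (g : GL (Fin n) (ZMod p)) :
    uFun p n (List.replicate m q) g
      = (g : Matrix (Fin n) (Fin n) (ZMod p)) q.1 q.2 ^ m := by
  simp [uFun, List.map_replicate, List.prod_replicate]

def goodSet : Set (GL (Fin n) (ZMod p) → ZMod p) :=
  {f | ∃ L : List (Fin n × Fin n), 2 ≤ L.length ∧ f = uFun p n L}

def someSet : Set (GL (Fin n) (ZMod p) → ZMod p) :=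
  {f | ∃ L : List (Fin n × Fin n), f = uFun p n L}

def posSet : Set (GL (Fin n) (ZMod p) → ZMod p) :=
  {f | ∃ L : List (Fin n × Fin n), L ≠ [] ∧ f = uFun p n L}

lemma hp_two : 2 ≤ p := (Fact.out : p.Prime).two_le

/-- bump: every nonempty-list monomial function is also a length ≥ 2 monomial function. -/
lemma posSet_subset_goodSet : posSet p n ⊆ goodSet p n := by
  rintro f ⟨L, hL, rfl⟩
  obtain ⟨q, L', rfl⟩ : ∃ q L', L = q :: L' := by
    cases L with
    | nil => exact absurd rfl hL
    | cons q L' => exact ⟨q, L', rfl⟩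
  refine ⟨q :: L' ++ List.replicate (p - 1) q, ?_, ?_⟩
  · simp only [List.length_append, List.length_cons, List.length_replicate]
    have := hp_two p
    omega
  · funext g
    have hcard : ∀ a : ZMod p, a * a ^ (p - 1) = a := by
      intro a
      have h2 : a * a ^ (p-1) = a ^ p := by
        rw [← pow_succ']
        congr 1
        have := hp_two p
        omega
      rw [h2, ZMod.pow_card]
    show uFun p n (q :: L') g = uFun p n ((q :: L') ++ List.replicate (p-1) q) g
    rw [uFun_append, Pi.mul_apply, uFun_replicate]
    have hcons : uFun p n (q :: L') g
        = (g : Matrix (Fin n) (Fin n) (ZMod p)) q.1 q.2 * uFun p n L' g := by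
      simp [uFun]
    rw [hcons, mul_right_comm, hcard]

lemma span_mul_aux {f f' : GL (Fin n) (ZMod p) → ZMod p}
    (hf : f ∈ Submodule.span (ZMod p) (someSet p n))
    (hf' : f' ∈ Submodule.span (ZMod p) (posSet p n)) :
    f * f' ∈ Submodule.span (ZMod p) (posSet p n) := by
  have h1 : f * f' ∈ Submodule.span (ZMod p) (someSet p n) * Submodule.span (ZMod p) (posSet p n) :=
    Submodule.mul_mem_mul hf hf'
  rw [Submodule.span_mul_span] at h1
  refine Submodule.span_le.mpr ?_ h1
  rintro x ⟨a, ⟨L, rfl⟩, b, ⟨L', hL', rfl⟩, rfl⟩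
  refine Submodule.subset_span ⟨L ++ L', ?_, (uFun_append p n L L').symm⟩
  intro h
  rcases List.append_eq_nil_iff.mp h with ⟨h1, h2⟩
  exact hL' h2

lemma mul_mem_someSpan {f f' : GL (Fin n) (ZMod p) → ZMod p}
    (hf : f ∈ Submodule.span (ZMod p) (someSet p n))
    (hf' : f' ∈ Submodule.span (ZMod p) (someSet p n)) :
    f * f' ∈ Submodule.span (ZMod p) (someSet p n) := by
  have h1 : f * f' ∈ Submodule.span (ZMod p) (someSet p n) * Submodule.span (ZMod p) (someSet p n) :=
    Submodule.mul_mem_mul hf hf'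
  rw [Submodule.span_mul_span] at h1
  refine Submodule.span_le.mpr ?_ h1
  rintro x ⟨a, ⟨L, rfl⟩, b, ⟨L', rfl⟩, rfl⟩
  exact Submodule.subset_span ⟨L ++ L', (uFun_append p n L L').symm⟩

lemma one_mem_someSpan : (1 : GL (Fin n) (ZMod p) → ZMod p) ∈ Submodule.span (ZMod p) (someSet p n) := by
  rw [← uFun_nil p n]
  exact Submodule.subset_span ⟨[], rfl⟩

lemma chi_mem_someSpan (q : Fin n × Fin n) :
    (fun g : GL (Fin n) (ZMod p) => (g : Matrix (Fin n) (Fin n) (ZMod p)) q.1 q.2)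
      ∈ Submodule.span (ZMod p) (someSet p n) := by
  refine Submodule.subset_span ⟨[q], ?_⟩
  funext g
  simp [uFun]

lemma pow_mem_someSpan {f : GL (Fin n) (ZMod p) → ZMod p}
    (hf : f ∈ Submodule.span (ZMod p) (someSet p n)) (m : ℕ) :
    f ^ m ∈ Submodule.span (ZMod p) (someSet p n) := by
  induction m with
  | zero => simpa using one_mem_someSpan p n
  | succ m ih => rw [pow_succ]; exact mul_mem_someSpan p n ih hf

section Delta

/-- the function `1 - ∏_s (1 - g_{s,0}^{p-1})`, as an element of `span posSet`. -/
lemma corr_mem_posSpan (j0 : Fin n) (Q : Finset (Fin n)) :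
    (1 - ∏ s ∈ Q, (1 - (fun g : GL (Fin n) (ZMod p) =>
        (g : Matrix (Fin n) (Fin n) (ZMod p)) s j0) ^ (p - 1)))
      ∈ Submodule.span (ZMod p) (posSet p n) := by
  classical
  induction Q using Finset.cons_induction with
  | empty => simp
  | cons s₀ Q hs ih =>
    rw [Finset.prod_cons]
    have hring : ∀ a b : GL (Fin n) (ZMod p) → ZMod p,
        1 - (1 - a) * b = (1 - b) + a * b := by intro a b; ring
    rw [hring]
    refine Submodule.add_mem _ ih ?_
    have hpow : (fun g : GL (Fin n) (ZMod p) =>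
        (g : Matrix (Fin n) (Fin n) (ZMod p)) s₀ j0) ^ (p - 1)
          ∈ Submodule.span (ZMod p) (posSet p n) := by
      refine Submodule.subset_span ⟨List.replicate (p-1) (s₀, j0), ?_, ?_⟩
      · simp only [ne_eq, List.replicate_eq_nil_iff]
        have := hp_two p
        omega
      · funext g
        rw [uFun_replicate]
        rfl
    have hprod : (∏ s ∈ Q, (1 - (fun g : GL (Fin n) (ZMod p) =>
        (g : Matrix (Fin n) (Fin n) (ZMod p)) s j0) ^ (p - 1)))
          ∈ Submodule.span (ZMod p) (someSet p n) := by
      refine Finset.prod_induction _ _ (fun a b ha hb => mul_mem_someSpan p n ha hb)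
        (one_mem_someSpan p n) ?_
      intro s _
      refine Submodule.sub_mem _ (one_mem_someSpan p n) ?_
      exact pow_mem_someSpan p n (chi_mem_someSpan p n (s, j0)) (p-1)
    rw [mul_comm]
    exact span_mul_aux p n hprod hpow

lemma corr_eq_one (j0 : Fin n) (g : GL (Fin n) (ZMod p)) :
    (1 - ∏ s : Fin n, (1 - (fun g : GL (Fin n) (ZMod p) =>
        (g : Matrix (Fin n) (Fin n) (ZMod p)) s j0) ^ (p - 1))) g = 1 := by
  classical
  have hex : ∃ s : Fin n, (g : Matrix (Fin n) (Fin n) (ZMod p)) s j0 ≠ 0 := by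
    by_contra hcon
    push_neg at hcon
    have h1 : ((g⁻¹ : GL (Fin n) (ZMod p)) : Matrix (Fin n) (Fin n) (ZMod p))
        * (g : Matrix (Fin n) (Fin n) (ZMod p)) = 1 := by
      rw [← Units.val_mul, inv_mul_cancel, Units.val_one]
    have h2 := congrFun (congrFun h1 j0) j0
    rw [Matrix.mul_apply] at h2
    simp only [hcon, mul_zero, Finset.sum_const_zero] at h2
    rw [Matrix.one_apply_eq] at h2
    exact zero_ne_one h2
  obtain ⟨s, hs⟩ := hex
  have hzero : (∏ s : Fin n, (1 - (fun g : GL (Fin n) (ZMod p) =>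
      (g : Matrix (Fin n) (Fin n) (ZMod p)) s j0) ^ (p - 1))) g = 0 := by
    rw [Finset.prod_apply]
    refine Finset.prod_eq_zero (Finset.mem_univ s) ?_
    simp only [Pi.sub_apply, Pi.one_apply, Pi.pow_apply]
    rw [ZMod.pow_card_sub_one_eq_one hs]
    ring
  simp only [Pi.sub_apply, Pi.one_apply]
  rw [hzero]
  ring

/-- The delta function at `h` as an explicit polynomial expression in the entries. -/
def deltaExpr (h : GL (Fin n) (ZMod p)) : GL (Fin n) (ZMod p) → ZMod p :=
  ∏ q : Fin n × Fin n, (1 - ((fun g : GL (Fin n) (ZMod p) =>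
    (g : Matrix (Fin n) (Fin n) (ZMod p)) q.1 q.2)
      - (fun _ => (h : Matrix (Fin n) (Fin n) (ZMod p)) q.1 q.2)) ^ (p - 1))

lemma deltaExpr_eq (h g : GL (Fin n) (ZMod p)) :
    deltaExpr p n h g = if g = h then 1 else 0 := by
  classical
  rw [deltaExpr, Finset.prod_apply]
  by_cases hg : g = h
  · subst hg
    rw [if_pos rfl]
    refine Finset.prod_eq_one ?_
    intro q _
    simp only [Pi.sub_apply, Pi.one_apply, Pi.pow_apply]
    rw [sub_self, zero_pow (by have := hp_two p; omega), sub_zero]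
  · rw [if_neg hg]
    have hex : ∃ q : Fin n × Fin n,
        (g : Matrix (Fin n) (Fin n) (ZMod p)) q.1 q.2
          ≠ (h : Matrix (Fin n) (Fin n) (ZMod p)) q.1 q.2 := by
      by_contra hcon
      push_neg at hcon
      apply hg
      have : (g : Matrix (Fin n) (Fin n) (ZMod p)) = (h : Matrix (Fin n) (Fin n) (ZMod p)) := by
        ext i j
        exact hcon (i, j)
      exact Units.ext this
    obtain ⟨q, hq⟩ := hex
    refine Finset.prod_eq_zero (Finset.mem_univ q) ?_
    simp only [Pi.sub_apply, Pi.one_apply, Pi.pow_apply]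
    rw [ZMod.pow_card_sub_one_eq_one (sub_ne_zero.mpr hq)]
    ring

lemma deltaExpr_mem_someSpan (h : GL (Fin n) (ZMod p)) :
    deltaExpr p n h ∈ Submodule.span (ZMod p) (someSet p n) := by
  rw [deltaExpr]
  refine Finset.prod_induction _ _ (fun a b ha hb => mul_mem_someSpan p n ha hb)
    (one_mem_someSpan p n) ?_
  intro q _
  refine Submodule.sub_mem _ (one_mem_someSpan p n) ?_
  refine pow_mem_someSpan p n ?_ (p-1)
  refine Submodule.sub_mem _ (chi_mem_someSpan p n q) ?_
  have : (fun _ : GL (Fin n) (ZMod p) => (h : Matrix (Fin n) (Fin n) (ZMod p)) q.1 q.2)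
      = ((h : Matrix (Fin n) (Fin n) (ZMod p)) q.1 q.2) • (1 : GL (Fin n) (ZMod p) → ZMod p) := by
    funext g; simp
  rw [this]
  exact Submodule.smul_mem _ _ (one_mem_someSpan p n)

lemma delta_mem_goodSpan (hn : 1 ≤ n) (h : GL (Fin n) (ZMod p)) :
    (fun g : GL (Fin n) (ZMod p) => if g = h then (1 : ZMod p) else 0)
      ∈ Submodule.span (ZMod p) (goodSet p n) := by
  classical
  have j0 : Fin n := ⟨0, hn⟩
  have key : (fun g : GL (Fin n) (ZMod p) => if g = h then (1 : ZMod p) else 0)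
      = deltaExpr p n h * (1 - ∏ s : Fin n, (1 - (fun g : GL (Fin n) (ZMod p) =>
          (g : Matrix (Fin n) (Fin n) (ZMod p)) s j0) ^ (p - 1))) := by
    funext g
    rw [Pi.mul_apply, corr_eq_one, mul_one, deltaExpr_eq]
  rw [key]
  have hmem : deltaExpr p n h * (1 - ∏ s : Fin n, (1 - (fun g : GL (Fin n) (ZMod p) =>
      (g : Matrix (Fin n) (Fin n) (ZMod p)) s j0) ^ (p - 1)))
        ∈ Submodule.span (ZMod p) (posSet p n) :=
    span_mul_aux p n (deltaExpr_mem_someSpan p n h) (corr_mem_posSpan p n j0 Finset.univ)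
  exact Submodule.span_mono (posSet_subset_goodSet p n) hmem

end Delta

/-- the key pairing lemma: any nonzero element of the group algebra pairs nontrivially
with some monomial function of length `≥ 2`. -/
lemma pairing_lemma (hn : 1 ≤ n) (c : MonoidAlgebra (ZMod p) (GL (Fin n) (ZMod p)))
    (hc : c ≠ 0) :
    ∃ f ∈ goodSet p n, ∑ g : GL (Fin n) (ZMod p), c.coeff g * f g ≠ 0 := by
  classical
  by_contra hcon
  push_neg at hcon
  -- the pairing linear functional
  let Φ : (GL (Fin n) (ZMod p) → ZMod p) →ₗ[ZMod p] ZMod p :=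
    { toFun := fun f => ∑ g : GL (Fin n) (ZMod p), c.coeff g * f g
      map_add' := by
        intro f f'
        simp [mul_add, Finset.sum_add_distrib]
      map_smul' := by
        intro r f
        simp [Finset.mul_sum, mul_left_comm] }
  have hker : Submodule.span (ZMod p) (goodSet p n) ≤ LinearMap.ker Φ := by
    rw [Submodule.span_le]
    intro f hf
    exact LinearMap.mem_ker.mpr (hcon f hf)
  obtain ⟨h, hh⟩ : ∃ h, c.coeff h ≠ 0 := by
    by_contra hcc
    push_neg at hcc
    exact hc (MonoidAlgebra.ext (Finsupp.ext hcc))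
  have hδ := hker (delta_mem_goodSpan p n hn h)
  rw [LinearMap.mem_ker] at hδ
  apply hh
  have : Φ (fun g : GL (Fin n) (ZMod p) => if g = h then (1 : ZMod p) else 0) = c.coeff h := by
    show (∑ g : GL (Fin n) (ZMod p), c.coeff g * if g = h then (1:ZMod p) else 0) = c.coeff h
    rw [Finset.sum_eq_single h]
    · simp
    · intro b _ hb
      simp [hb]
    · intro hmem
      exact absurd (Finset.mem_univ h) hmem
  rw [this] at hδ
  exact hδ

end SpanPart

section PolyPart
variable (p n : ℕ) [Fact p.Prime]

lemma hp_two' : 2 ≤ p := (Fact.out : p.Prime).two_le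

noncomputable def sigmaA (g : GL (Fin n) (ZMod p)) :
    MvPolynomial (Fin n) (ZMod p) →ₐ[ZMod p] MvPolynomial (Fin n) (ZMod p) :=
  bind₁ fun j : Fin n => ∑ i : Fin n, (g : Matrix (Fin n) (Fin n) (ZMod p)) i j • X i

lemma frob_sum (a : ℕ) (b : Fin n → ZMod p) :
    (∑ i : Fin n, b i • (X i : MvPolynomial (Fin n) (ZMod p))) ^ (p ^ a)
      = ∑ i : Fin n, b i • (X i : MvPolynomial (Fin n) (ZMod p)) ^ (p ^ a) := by
  haveI : ExpChar (MvPolynomial (Fin n) (ZMod p)) p := ExpChar.prime Fact.out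
  rw [sum_pow_char_pow]
  refine Finset.sum_congr rfl fun i _ => ?_
  rw [smul_pow, ZMod.pow_card_pow]

lemma sigma_X_pow (g : GL (Fin n) (ZMod p)) (j : Fin n) (a : ℕ) :
    sigmaA p n g ((X j : MvPolynomial (Fin n) (ZMod p)) ^ p ^ a)
      = ∑ i : Fin n, monomial (Finsupp.single i (p ^ a))
          ((g : Matrix (Fin n) (Fin n) (ZMod p)) i j) := by
  rw [map_pow, sigmaA, bind₁_X_right, frob_sum]
  refine Finset.sum_congr rfl fun i _ => ?_
  rw [X_pow_eq_monomial, smul_monomial, smul_eq_mul, mul_one]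

lemma prod_monomial (m : ℕ) (d : Fin m → (Fin n →₀ ℕ)) (c : Fin m → ZMod p) :
    (∏ k : Fin m, (monomial (d k) (c k) : MvPolynomial (Fin n) (ZMod p)))
      = monomial (∑ k : Fin m, d k) (∏ k : Fin m, c k) := by
  induction m with
  | zero => simp
  | succ m ih =>
    rw [Fin.prod_univ_succ, Fin.sum_univ_succ, Fin.prod_univ_succ,
      ih (fun k => d k.succ) (fun k => c k.succ), monomial_mul]

-- patterns
def PatT : Type := {f : GL (Fin n) (ZMod p) → ZMod p // f ∈ goodSet p n}

instance : Finite (PatT p n) := Subtype.finite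

noncomputable instance : Fintype (PatT p n) := Fintype.ofFinite _

noncomputable def patL (t : PatT p n) : List (Fin n × Fin n) := t.2.choose

noncomputable instance : DecidableEq (PatT p n) := by
  unfold PatT
  classical
  infer_instance

lemma patL_len (t : PatT p n) : 2 ≤ (patL p n t).length := t.2.choose_spec.1

lemma patL_fun (t : PatT p n) : t.1 = uFun p n (patL p n t) := t.2.choose_spec.2

noncomputable def idxT (t : PatT p n) : ℕ := ((Fintype.equivFin (PatT p n)) t : Fin _).val

lemma idxT_inj : Function.Injective (idxT p n) := by
  intro t t' h
  have := Fin.val_injective h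
  exact (Fintype.equivFin (PatT p n)).injective this

noncomputable def KB : ℕ := (Finset.univ.sup fun t : PatT p n => (patL p n t).length) + 1

lemma len_lt_KB (t : PatT p n) : (patL p n t).length < KB p n :=
  Nat.lt_succ_of_le (Finset.le_sup (f := fun t => (patL p n t).length) (Finset.mem_univ t))

noncomputable def posA (t : PatT p n) (k : ℕ) : ℕ :=
  if k = 0 then 0 else idxT p n t * KB p n + k

lemma posA_zero (t : PatT p n) : posA p n t 0 = 0 := by simp [posA]

lemma posA_pos (t : PatT p n) {k : ℕ} (hk : k ≠ 0) : 1 ≤ posA p n t k := by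
  rw [posA, if_neg hk]
  omega

lemma posA_inj (t : PatT p n) {k k' : ℕ} (h : posA p n t k = posA p n t k') : k = k' := by
  rw [posA, posA] at h
  split_ifs at h with h1 h2 h2 <;> omega

lemma posA_eq (t t' : PatT p n) {k k' : ℕ} (hk : k ≠ 0) (hk2 : k < KB p n)
    (hk' : k' ≠ 0) (hk2' : k' < KB p n)
    (h : posA p n t k = posA p n t' k') : t = t' := by
  rw [posA, if_neg hk, posA, if_neg hk'] at h
  have hKB : 0 < KB p n := by rw [KB]; omega
  have h1 : (idxT p n t * KB p n + k) / KB p n = idxT p n t := by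
    rw [mul_comm, Nat.mul_add_div hKB, Nat.div_eq_of_lt hk2, Nat.add_zero]
  have h2 : (idxT p n t' * KB p n + k') / KB p n = idxT p n t' := by
    rw [mul_comm, Nat.mul_add_div hKB, Nat.div_eq_of_lt hk2', Nat.add_zero]
  apply idxT_inj p n
  rw [← h1, ← h2, h]

noncomputable def yPoly (t : PatT p n) : MvPolynomial (Fin n) (ZMod p) :=
  ∏ k : Fin (patL p n t).length, (X ((patL p n t).get k).2 : MvPolynomial (Fin n) (ZMod p))
    ^ p ^ posA p n t k.val

noncomputable def expoF (t : PatT p n) (j : Fin (patL p n t).length → Fin n) : Fin n →₀ ℕ :=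
  ∑ k : Fin (patL p n t).length, Finsupp.single (j k) (p ^ posA p n t k.val)

noncomputable def rowsF (t : PatT p n) : Fin (patL p n t).length → Fin n :=
  fun k => ((patL p n t).get k).1

lemma sigma_yPoly (g : GL (Fin n) (ZMod p)) (t : PatT p n) :
    sigmaA p n g (yPoly p n t)
      = ∑ j : Fin (patL p n t).length → Fin n,
          monomial (expoF p n t j)
            (∏ k : Fin (patL p n t).length,
              (g : Matrix (Fin n) (Fin n) (ZMod p)) (j k) ((patL p n t).get k).2) := by
  rw [yPoly, map_prod]
  have h1 : ∀ k : Fin (patL p n t).length,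
      sigmaA p n g ((X ((patL p n t).get k).2 : MvPolynomial (Fin n) (ZMod p))
        ^ p ^ posA p n t k.val)
      = ∑ i : Fin n, monomial (Finsupp.single i (p ^ posA p n t k.val))
          ((g : Matrix (Fin n) (Fin n) (ZMod p)) i ((patL p n t).get k).2) :=
    fun k => sigma_X_pow p n g _ _
  rw [Finset.prod_congr rfl (fun k _ => h1 k), Finset.prod_univ_sum]
  rw [Fintype.piFinset_univ]
  refine Finset.sum_congr rfl fun j _ => ?_
  rw [prod_monomial, expoF]

lemma expoF_apply (t : PatT p n) (j : Fin (patL p n t).length → Fin n) (v : Fin n) :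
    expoF p n t j v
      = ∑ a ∈ (Finset.univ.filter (fun k : Fin (patL p n t).length => j k = v)).image
          (fun k => posA p n t k.val), p ^ a := by
  rw [Finset.sum_image]
  · rw [expoF, Finsupp.finset_sum_apply, Finset.sum_filter]
    exact Finset.sum_congr rfl fun k _ => by simp [Finsupp.single_apply]
  · intro k _ k' _ h
    exact Fin.val_injective (posA_inj p n t h)

lemma uFun_eq_prod (L : List (Fin n × Fin n)) (g : GL (Fin n) (ZMod p)) :
    uFun p n L g = ∏ k : Fin L.length,
      (g : Matrix (Fin n) (Fin n) (ZMod p)) (L.get k).1 (L.get k).2 := by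
  rw [uFun]
  conv_lhs => rw [← List.ofFn_get L]
  rw [List.map_ofFn, List.prod_ofFn]
  rfl

-- cross-pattern injectivity
lemma expoF_eq_same (t : PatT p n) (j j' : Fin (patL p n t).length → Fin n)
    (h : expoF p n t j = expoF p n t j') : j = j' := by
  classical
  funext k
  set v := j k with hv
  have himg : ((Finset.univ.filter (fun k : Fin (patL p n t).length => j k = v)).image
        (fun k => posA p n t k.val))
      = ((Finset.univ.filter (fun k : Fin (patL p n t).length => j' k = v)).image
        (fun k => posA p n t k.val)) := by
    apply sum_pow_inj p (hp_two' p) (expoF p n t j v) _ _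
    · rw [← expoF_apply]
    · rw [← expoF_apply, h]
  have hmem : posA p n t k.val ∈ (Finset.univ.filter
      (fun k' : Fin (patL p n t).length => j k' = v)).image (fun k => posA p n t k.val) := by
    refine Finset.mem_image.mpr ⟨k, ?_, rfl⟩
    simp [hv]
  rw [himg] at hmem
  obtain ⟨k', hk', hpk⟩ := Finset.mem_image.mp hmem
  have hkk : k' = k := Fin.val_injective (posA_inj p n t hpk)
  subst hkk
  exact ((Finset.mem_filter.mp hk').2).symm

lemma expoF_eq_cross (t t' : PatT p n) (j : Fin (patL p n t).length → Fin n)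
    (j' : Fin (patL p n t').length → Fin n)
    (h : expoF p n t j = expoF p n t' j') : t = t' := by
  classical
  have hlen := patL_len p n t
  set k1 : Fin (patL p n t).length := ⟨1, by omega⟩ with hk1
  have hk1v : (k1 : ℕ) = 1 := by rw [hk1]
  set v := j k1 with hv
  have himg : ((Finset.univ.filter (fun k : Fin (patL p n t).length => j k = v)).image
        (fun k => posA p n t k.val))
      = ((Finset.univ.filter (fun k : Fin (patL p n t').length => j' k = v)).image
        (fun k => posA p n t' k.val)) := by
    apply sum_pow_inj p (hp_two' p) (expoF p n t j v) _ _
    · rw [← expoF_apply]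
    · rw [← expoF_apply, ← h]
  have hmem : posA p n t (k1 : ℕ) ∈ (Finset.univ.filter
      (fun k : Fin (patL p n t).length => j k = v)).image (fun k => posA p n t k.val) := by
    refine Finset.mem_image.mpr ⟨k1, ?_, rfl⟩
    simp [hv]
  rw [himg] at hmem
  obtain ⟨k', _, hpk⟩ := Finset.mem_image.mp hmem
  -- posA p n t' k' = posA p n t 1, both nonzero positions
  have hk'0 : (k' : ℕ) ≠ 0 := by
    intro h0
    rw [h0, posA_zero] at hpk
    have := posA_pos p n t (k := (k1 : ℕ)) (by omega)
    omega
  exact (posA_eq p n t' t hk'0 (lt_trans k'.isLt (len_lt_KB p n t'))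
    (by omega) (lt_of_lt_of_le (by omega) (le_of_lt (len_lt_KB p n t))) hpk).symm

lemma coeff_sigma_yPoly (g : GL (Fin n) (ZMod p)) (t t₀ : PatT p n) :
    coeff (expoF p n t₀ (rowsF p n t₀)) (sigmaA p n g (yPoly p n t))
      = if t = t₀ then uFun p n (patL p n t₀) g else 0 := by
  classical
  rw [sigma_yPoly, coeff_sum]
  by_cases ht : t = t₀
  · subst ht
    rw [if_pos rfl]
    rw [Finset.sum_eq_single (rowsF p n t)]
    · rw [coeff_monomial, if_pos rfl, uFun_eq_prod]
      rfl
    · intro j _ hj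
      rw [coeff_monomial, if_neg]
      intro hc
      exact hj (expoF_eq_same p n t j (rowsF p n t) hc)
    · intro hmem
      exact absurd (Finset.mem_univ _) hmem
  · rw [if_neg ht]
    refine Finset.sum_eq_zero fun j _ => ?_
    rw [coeff_monomial, if_neg]
    intro hc
    exact ht (expoF_eq_cross p n t t₀ j (rowsF p n t₀) hc)

lemma mon0_not_dvd (t : PatT p n) :
    ¬ (p : ℕ) ∣ (expoF p n t (rowsF p n t)) (rowsF p n t ⟨0, by have := patL_len p n t; omega⟩) := by
  classical
  have hlen := patL_len p n t
  set k0 : Fin (patL p n t).length := ⟨0, by omega⟩ with hk0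
  set v := rowsF p n t k0 with hv
  rw [expoF, Finsupp.finset_sum_apply]
  rw [← Finset.add_sum_erase Finset.univ
    (fun k => (Finsupp.single (rowsF p n t k) (p ^ posA p n t k.val)) v) (Finset.mem_univ k0)]
  have h0 : (Finsupp.single (rowsF p n t k0) (p ^ posA p n t k0.val)) v = 1 := by
    rw [← hv, Finsupp.single_eq_same]
    have : posA p n t (k0 : ℕ) = 0 := by rw [hk0, posA_zero]
    rw [this, pow_zero]
  rw [h0]
  intro hdvd
  have hrest : (p : ℕ) ∣ ∑ k ∈ Finset.univ.erase k0,
      (Finsupp.single (rowsF p n t k) (p ^ posA p n t k.val)) v := by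
    refine Finset.dvd_sum fun k hk => ?_
    have hk0' : (k : ℕ) ≠ 0 := by
      intro hc
      exact (Finset.mem_erase.mp hk).1 (Fin.val_injective hc)
    rw [Finsupp.single_apply]
    split_ifs
    · exact dvd_pow_self p (by have := posA_pos p n t hk0'; omega)
    · exact dvd_zero p
  have hp2 := hp_two' p
  have hone : (p:ℕ) ∣ 1 := (Nat.dvd_add_right hrest).mp (by rwa [Nat.add_comm])
  have := Nat.le_of_dvd one_pos hone
  omega

end PolyPart


section Assembly
variable (p n : ℕ) [Fact p.Prime]

lemma expand_monomial_eq (d : Fin n →₀ ℕ) (r : ZMod p) :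
    MvPolynomial.expand p (monomial d r : MvPolynomial (Fin n) (ZMod p))
      = monomial (p • d) r := by
  have hp0 : p ≠ 0 := by have := hp_two p; omega
  rw [expand_monomial, monomial_eq]

lemma not_mem_expandRange {f : MvPolynomial (Fin n) (ZMod p)} {m : Fin n →₀ ℕ} (v : Fin n)
    (hco : MvPolynomial.coeff m f ≠ 0) (hdvd : ¬ ((p:ℕ) ∣ m v)) : f ∉ expandRange p n := by
  rintro ⟨w, rfl⟩
  apply hdvd
  have hexp : (MvPolynomial.expand p :
        MvPolynomial (Fin n) (ZMod p) →ₐ[ZMod p] MvPolynomial (Fin n) (ZMod p)).toLinearMap w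
      = ∑ s ∈ w.support, monomial (p • s) (MvPolynomial.coeff s w) := by
    show MvPolynomial.expand p w = _
    conv_lhs => rw [w.as_sum]
    rw [map_sum]
    exact Finset.sum_congr rfl fun s _ => expand_monomial_eq p n s _
  rw [hexp, MvPolynomial.coeff_sum] at hco
  obtain ⟨s, _, hne⟩ := Finset.exists_ne_zero_of_sum_ne_zero hco
  rw [coeff_monomial] at hne
  have hm : p • s = m := by
    by_contra hcne
    rw [if_neg hcne] at hne
    exact hne rfl
  rw [← hm, Finsupp.smul_apply, smul_eq_mul]
  exact Dvd.intro _ rfl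

lemma glSub_eq_sigma (g : GL (Fin n) (ZMod p)) (f : MvPolynomial (Fin n) (ZMod p)) :
    glSubstitution p n g f = sigmaA p n g f := rfl

theorem exists_good_x (hn : 1 ≤ n) :
    ∃ x : (glSubstitutionQuot p n).asModule,
      ∀ c : MonoidAlgebra (ZMod p) (GL (Fin n) (ZMod p)), c ≠ 0 → c • x ≠ 0 := by
  classical
  set xt : MvPolynomial (Fin n) (ZMod p) := ∑ t : PatT p n, yPoly p n t with hxt
  refine ⟨(glSubstitutionQuot p n).asModuleEquiv.symm (Submodule.Quotient.mk xt), ?_⟩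
  intro c hc
  set z : MvPolynomial (Fin n) (ZMod p) :=
      ∑ g : GL (Fin n) (ZMod p), c.coeff g • sigmaA p n g xt with hz
  -- the action computes to `mk z`
  have hc' : c = ∑ g : GL (Fin n) (ZMod p), MonoidAlgebra.single g (c.coeff g) := by
    conv_lhs => rw [← MonoidAlgebra.sum_coeff_single c]
    rw [Finsupp.sum_fintype]
    intro g
    exact MonoidAlgebra.single_zero g
  have hsmul : (glSubstitutionQuot p n).asModuleEquiv
      (c • (glSubstitutionQuot p n).asModuleEquiv.symm (Submodule.Quotient.mk xt))
      = Submodule.Quotient.mk z := by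
    rw [Representation.asModuleEquiv_map_smul, LinearEquiv.apply_symm_apply]
    conv_lhs => rw [hc']
    rw [map_sum, LinearMap.sum_apply]
    have hterm : ∀ g : GL (Fin n) (ZMod p),
        (Representation.asAlgebraHom (glSubstitutionQuot p n) (MonoidAlgebra.single g (c.coeff g)))
          (Submodule.Quotient.mk xt)
        = (expandRange p n).mkQ (c.coeff g • sigmaA p n g xt) := by
      intro g
      rw [Representation.asAlgebraHom_single, LinearMap.smul_apply]
      have : (glSubstitutionQuot p n) g (Submodule.Quotient.mk xt)
          = Submodule.Quotient.mk (glSubstitution p n g xt) := by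
        show Submodule.mapQ (expandRange p n) (expandRange p n) (glSubstitution p n g)
          (expandRange_stable p n g) (Submodule.Quotient.mk xt) = _
        rw [Submodule.mapQ_apply]
      rw [this, glSub_eq_sigma, map_smul, Submodule.mkQ_apply]
    rw [Finset.sum_congr rfl fun g _ => hterm g, ← map_sum, ← hz, Submodule.mkQ_apply]
  -- the coefficient of the designated monomial of `z` is the nonzero pairing
  obtain ⟨f, hfgood, hpair⟩ := pairing_lemma p n hn c hc
  set t₀ : PatT p n := ⟨f, hfgood⟩ with ht₀
  have hcoeff : MvPolynomial.coeff (expoF p n t₀ (rowsF p n t₀)) z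
      = ∑ g : GL (Fin n) (ZMod p), c.coeff g * f g := by
    rw [hz, MvPolynomial.coeff_sum]
    refine Finset.sum_congr rfl fun g _ => ?_
    rw [MvPolynomial.coeff_smul, hxt, map_sum, MvPolynomial.coeff_sum]
    have : ∀ t : PatT p n, MvPolynomial.coeff (expoF p n t₀ (rowsF p n t₀))
        (sigmaA p n g (yPoly p n t)) = if t = t₀ then uFun p n (patL p n t₀) g else 0 :=
      fun t => coeff_sigma_yPoly p n g t t₀
    rw [Finset.sum_congr rfl fun t _ => this t, Finset.sum_ite_eq' Finset.univ t₀]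
    rw [if_pos (Finset.mem_univ t₀)]
    have hf : uFun p n (patL p n t₀) g = f g := by
      rw [← patL_fun p n t₀]
    rw [hf, smul_eq_mul]
  have hznotE : z ∉ expandRange p n := by
    refine not_mem_expandRange p n (m := expoF p n t₀ (rowsF p n t₀))
      (rowsF p n t₀ ⟨0, by have := patL_len p n t₀; omega⟩) ?_ ?_
    · rw [hcoeff]; exact hpair
    · exact mon0_not_dvd p n t₀
  intro h0
  apply hznotE
  rw [← Submodule.Quotient.mk_eq_zero, ← hsmul, h0, map_zero]

end Assembly

/-- The final Lemma of Section 7 of the paper: every simple module over the group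
algebra `F_p[GL_n(F_p)]` occurs as a composition factor of the `GL_n(F_p)`-module
`R/E`, where `R = F_p[X_1,…,X_n]` carries the linear-substitution action and `E` is
the subspace of polynomials in the `p`-th powers of the variables: there are
`F_p[GL_n(F_p)]`-submodules `N ⊆ N′` of `R/E` with `N′/N` isomorphic to `S`. -/
theorem simple_module_is_composition_factor (p n : ℕ) [Fact p.Prime] (hn : 1 ≤ n)
    (S : Type) [AddCommGroup S]
    [Module (MonoidAlgebra (ZMod p) (GL (Fin n) (ZMod p))) S]
    [IsSimpleModule (MonoidAlgebra (ZMod p) (GL (Fin n) (ZMod p))) S] :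
    ∃ N N' : Submodule (MonoidAlgebra (ZMod p) (GL (Fin n) (ZMod p)))
        (glSubstitutionQuot p n).asModule,
      N ≤ N' ∧
      Nonempty ((@HasQuotient.Quotient ↥N' _ (@Submodule.hasQuotient _ _ _ _ _)
          (Submodule.comap N'.subtype N))
        ≃ₗ[MonoidAlgebra (ZMod p) (GL (Fin n) (ZMod p))] S) := by
  classical
  obtain ⟨x, hx⟩ := exists_good_x p n hn
  let φ := LinearMap.toSpanSingleton (MonoidAlgebra (ZMod p) (GL (Fin n) (ZMod p)))
    (glSubstitutionQuot p n).asModule x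
  have hφ : Function.Injective φ := by
    rw [← LinearMap.ker_eq_bot, LinearMap.ker_eq_bot']
    intro a ha
    by_contra hne
    refine hx a hne ?_
    rw [← LinearMap.toSpanSingleton_apply (MonoidAlgebra (ZMod p) (GL (Fin n) (ZMod p)))
      (glSubstitutionQuot p n).asModule x a]
    exact ha
  haveI : Nontrivial S :=
    IsSimpleModule.nontrivial (MonoidAlgebra (ZMod p) (GL (Fin n) (ZMod p))) S
  obtain ⟨s, hs⟩ := exists_ne (0 : S)
  let ψ := LinearMap.toSpanSingleton (MonoidAlgebra (ZMod p) (GL (Fin n) (ZMod p))) S s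
  have hψ : Function.Surjective ψ :=
    IsSimpleModule.toSpanSingleton_surjective (MonoidAlgebra (ZMod p) (GL (Fin n) (ZMod p))) hs
  refine ⟨Submodule.map φ (LinearMap.ker ψ), LinearMap.range φ, LinearMap.map_le_range, ⟨?_⟩⟩
  let e1 := LinearEquiv.ofInjective φ hφ
  have hmap : Submodule.map (e1 : MonoidAlgebra (ZMod p) (GL (Fin n) (ZMod p))
        →ₗ[MonoidAlgebra (ZMod p) (GL (Fin n) (ZMod p))] LinearMap.range φ) (LinearMap.ker ψ)
      = Submodule.comap (LinearMap.range φ).subtype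
          (Submodule.map φ (LinearMap.ker ψ)) := by
    ext y
    simp only [Submodule.mem_map, Submodule.mem_comap]
    constructor
    · rintro ⟨a, ha, rfl⟩
      exact ⟨a, ha, rfl⟩
    · rintro ⟨a, ha, hay⟩
      refine ⟨a, ha, ?_⟩
      apply Subtype.ext
      exact hay
  let e2 := Submodule.Quotient.equiv (σ₁₂ := RingHom.id _) (σ₂₁ := RingHom.id _) (LinearMap.ker ψ)
    (Submodule.comap (LinearMap.range φ).subtype (Submodule.map φ (LinearMap.ker ψ))) (N := LinearMap.range φ) (by exact e1) (by exact hmap)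
  exact e2.symm.trans (ψ.quotKerEquivOfSurjective hψ)
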